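/- Let (θ_k) be a nonincreasing sequence in (0,1) converging to θ* > 0, and let nonnegative sequences a_k, b_k satisfy θ_{k+1}·a_{k+1} + (1−θ_{k+1})·b_{k+1} ≤ θ_{k+1}·a_k + (1−θ_{k+1})·b_k − c·b_k for all k with c > 0, and a_k ≤ M for all k. Then b_k → 0. -/

import Mathlib

open Filter

theorem stmt_14 (θ : ℕ → ℝ) (hθ0 : ∀ k, 0 < θ k) (hθ1 : ∀ k, θ k < 1)
    (hθmono : Antitone θ) (θstar : ℝ) (hθstar : 0 < θstar)
    (hθlim : Tendsto θ atTop (nhds θstar))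
    (a b : ℕ → ℝ) (ha : ∀ k, 0 ≤ a k) (hb : ∀ k, 0 ≤ b k)
    (M : ℝ) (haM : ∀ k, a k ≤ M)
    (c : ℝ) (hc : 0 < c)
    (hrec : ∀ k, θ (k + 1) * a (k + 1) + (1 - θ (k + 1)) * b (k + 1) ≤
        θ (k + 1) * a k + (1 - θ (k + 1)) * b k - c * b k) :
    Tendsto b atTop (nhds 0) := by
  set φ : ℕ → ℝ := fun k => θ k / (1 - θ k) with hφ
  have hden : ∀ k, 0 < 1 - θ k := fun k => by linarith [hθ1 k]
  have hφpos : ∀ k, 0 < φ k := fun k => div_pos (hθ0 k) (hden k)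
  have hφmono : ∀ k, φ (k + 1) ≤ φ k := by
    intro k
    rw [hφ]
    have h1 := hden k
    have h2 := hden (k + 1)
    rw [div_le_div_iff₀ h2 h1]
    nlinarith [hθmono (Nat.le_succ k)]
  have key : ∀ k, c * b k + b (k + 1) + φ (k + 1) * a (k + 1) ≤
      b k + φ (k + 1) * a k := by
    intro k
    have ht := hden (k + 1)
    have hd : φ (k + 1) * (1 - θ (k + 1)) = θ (k + 1) :=
      div_mul_cancel₀ _ ht.ne'
    have hd1 : φ (k + 1) * a (k + 1) * (1 - θ (k + 1)) = θ (k + 1) * a (k + 1) := by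
      rw [mul_right_comm, hd]
    have hd2 : φ (k + 1) * a k * (1 - θ (k + 1)) = θ (k + 1) * a k := by
      rw [mul_right_comm, hd]
    rw [← mul_le_mul_iff_of_pos_right ht, add_mul, add_mul, add_mul, hd1, hd2]
    nlinarith [hrec k, mul_nonneg (hθ0 (k+1)).le (mul_nonneg hc.le (hb k))]
  have main : ∀ n, c * (∑ k ∈ Finset.range n, b k) + b n + φ (n + 1) * a n ≤
      b 0 + φ 1 * a 0 := by
    intro n
    induction n with
    | zero => simp
    | succ n ih =>
      rw [Finset.sum_range_succ]
      have h1 := key n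
      have h2 : φ (n + 2) * a (n + 1) ≤ φ (n + 1) * a (n + 1) :=
        mul_le_mul_of_nonneg_right (hφmono (n + 1)) (ha (n + 1))
      nlinarith
  have hsum : ∀ n, ∑ k ∈ Finset.range n, b k ≤ (b 0 + φ 1 * a 0) / c := by
    intro n
    rw [le_div_iff₀ hc, mul_comm]
    have := main n
    nlinarith [hb n, mul_nonneg (hφpos (n + 1)).le (ha n)]
  have : Summable b := summable_of_sum_range_le hb hsum
  exact this.tendsto_atTop_zero
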